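/- Let g be real with 0 < g < 1/8 and set T = (1 − √(1 − 8g))/(4g). There is a unique real χ with 0 < χ < 1 satisfying (1 + χ)² = T·(1 + χ²), and for this χ the sequence defined for integers j ≥ −1 by Tⱼ = T·(1 − χ^(j+1))·(1 − χ^(j+5)) / ((1 − χ^(j+2))·(1 − χ^(j+4))) satisfies: (i) T₋₁ = 0; (ii) Tⱼ = 1 + g·Tⱼ·(T_(j−1) + T_(j+1)) for every j ≥ 0; and (iii) Tⱼ → T as j → ∞. -/

import Mathlib

set_option maxHeartbeats 1000000 in
/-- Closed-form solution for the label-height generating functions of labeled plane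
trees: there is a unique `χ ∈ (0,1)` with `(1 + χ)² = T·(1 + χ²)`, and
`Tⱼ = T·(1 − χ^(j+1))·(1 − χ^(j+5))/((1 − χ^(j+2))·(1 − χ^(j+4)))` satisfies
`T₋₁ = 0`, the c=0 recurrence for `j ≥ 0`, and `Tⱼ → T`. -/
theorem stmt_9 (g : ℝ) (hg0 : 0 < g) (hg1 : g < 1/8) :
    let T : ℝ := (1 - Real.sqrt (1 - 8*g))/(4*g)
    (∃! χ : ℝ, 0 < χ ∧ χ < 1 ∧ (1 + χ)^2 = T * (1 + χ^2)) ∧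
    ∀ χ : ℝ, 0 < χ → χ < 1 → (1 + χ)^2 = T * (1 + χ^2) →
      let Tseq : ℤ → ℝ := fun j =>
        T * (1 - χ^(j+1)) * (1 - χ^(j+5)) / ((1 - χ^(j+2)) * (1 - χ^(j+4)))
      Tseq (-1) = 0 ∧
      (∀ j : ℤ, 0 ≤ j →
        Tseq j = 1 + g * Tseq j * (Tseq (j-1) + Tseq (j+1))) ∧
      Filter.Tendsto (fun j : ℕ => Tseq j) Filter.atTop (nhds T) := by
  intro T
  have h8 : (0:ℝ) < 1 - 8*g := by linarith
  have hTdef : T = (1 - Real.sqrt (1 - 8*g))/(4*g) := rfl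
  set s := Real.sqrt (1 - 8*g) with hsdef
  have hs2 : s ^ 2 = 1 - 8*g := Real.sq_sqrt h8.le
  have hs0 : 0 < s := Real.sqrt_pos.mpr h8
  have hs1 : s < 1 := by nlinarith
  have hg4 : (0:ℝ) < 4*g := by linarith
  have hslt : s < 1 - 4*g := by nlinarith
  have hsgt : 1 - 8*g < s := by nlinarith
  have hT1 : 1 < T := by
    rw [hTdef, lt_div_iff₀ hg4]; linarith
  have hT2 : T < 2 := by
    rw [hTdef, div_lt_iff₀ hg4]; linarith
  have hTg : 2*g*T^2 = T - 1 := by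
    rw [hTdef]; field_simp; nlinarith
  clear_value T
  clear hTdef hsdef
  clear_value s
  -- the canonical root χ₀
  obtain ⟨a, hadef⟩ : ∃ a : ℝ, a = T - 1 := ⟨_, rfl⟩
  have ha0 : 0 < a := by linarith
  have ha1 : a < 1 := by linarith
  have hu2 : Real.sqrt (1 - a^2) ^ 2 = 1 - a^2 := Real.sq_sqrt (by nlinarith)
  set u := Real.sqrt (1 - a^2) with hudef
  have hu0 : 0 < u := Real.sqrt_pos.mpr (by nlinarith)
  clear_value u
  have hu1 : u < 1 := by nlinarith
  have hugt : 1 - a < u := by nlinarith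
  obtain ⟨χ₀, hχ₀def⟩ : ∃ c : ℝ, c = (1 - u)/a := ⟨_, rfl⟩
  have hχ₀0 : 0 < χ₀ := by rw [hχ₀def]; exact div_pos (by linarith) ha0
  have hχ₀1 : χ₀ < 1 := by
    rw [hχ₀def, div_lt_one ha0]; linarith
  have hχ₀eq : (1 + χ₀)^2 = T * (1 + χ₀^2) := by
    have hT' : T = a + 1 := by rw [hadef]; ring
    rw [hχ₀def, hT']
    field_simp
    linear_combination (-a) * hu2
  constructor
  · refine ⟨χ₀, ⟨hχ₀0, hχ₀1, hχ₀eq⟩, ?_⟩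
    rintro y ⟨hy0, hy1, hyeq⟩
    have hfac : (y - χ₀) * ((T-1)*(y+χ₀) - 2) = 0 := by
      linear_combination hχ₀eq - hyeq
    have hne : (T-1)*(y+χ₀) - 2 < 0 := by nlinarith
    have := mul_eq_zero.mp hfac
    rcases this with h | h
    · linarith [sub_eq_zero.mp h]
    · linarith
  · intro χ hχ0 hχ1 hχeq Tseq
    have hχne : χ ≠ 0 := ne_of_gt hχ0
    have hd2 : (0:ℝ) < 1 + χ^2 := by positivity
    have hd1 : (0:ℝ) < 1 + χ := by linarith
    have hTval : T = (1+χ)^2/(1+χ^2) := by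
      rw [eq_div_iff hd2.ne']; exact hχeq.symm
    have hgval : g = χ*(1+χ^2)/(1+χ)^4 := by
      have h := hTg
      rw [hTval] at h
      field_simp at h
      rw [eq_div_iff (by positivity)]
      have h2 : (g*(1+χ)^4) * (2*(1+χ^2)) = (χ*(1+χ^2)) * (2*(1+χ^2)) := by
        linear_combination (1+χ^2) * h
      exact mul_right_cancel₀ (by positivity) h2
    -- powers
    have epow : ∀ (n k : ℕ), χ ^ ((n:ℤ) + (k:ℤ)) = χ^n * χ^k := by
      intro n k
      rw [zpow_add₀ hχne, zpow_natCast, zpow_natCast]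
    refine ⟨?_, ?_, ?_⟩
    · show T * (1 - χ^((-1:ℤ)+1)) * (1 - χ^((-1:ℤ)+5)) /
        ((1 - χ^((-1:ℤ)+2)) * (1 - χ^((-1:ℤ)+4))) = 0
      norm_num
    · intro j hj
      obtain ⟨n, rfl⟩ := Int.eq_ofNat_of_zero_le hj
      have e0 : χ ^ (n:ℤ) = χ^n := zpow_natCast χ n
      have e1 : χ ^ ((n:ℤ)+1) = χ^n * χ^1 := by exact_mod_cast epow n 1
      have e2 : χ ^ ((n:ℤ)+2) = χ^n * χ^2 := by exact_mod_cast epow n 2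
      have e3 : χ ^ ((n:ℤ)+3) = χ^n * χ^3 := by exact_mod_cast epow n 3
      have e4 : χ ^ ((n:ℤ)+4) = χ^n * χ^4 := by exact_mod_cast epow n 4
      have e5 : χ ^ ((n:ℤ)+5) = χ^n * χ^5 := by exact_mod_cast epow n 5
      have e6 : χ ^ ((n:ℤ)+6) = χ^n * χ^6 := by exact_mod_cast epow n 6
      have hy0 : 0 < χ^n := pow_pos hχ0 n
      have hy1 : χ^n ≤ 1 := pow_le_one₀ hχ0.le hχ1.le
      have hne : ∀ k : ℕ, 1 ≤ k → 1 - χ^n * χ^k ≠ 0 := by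
        intro k hk
        have : χ^k < 1 := pow_lt_one₀ hχ0.le hχ1 (by omega)
        have : χ^n * χ^k < 1 := by
          calc χ^n * χ^k ≤ 1 * χ^k := by
                apply mul_le_mul_of_nonneg_right hy1 (pow_pos hχ0 k).le
            _ < 1 := by simpa using this
        linarith
      simp only [Tseq,
        show (n:ℤ)-1+1 = (n:ℤ) from by ring,
        show (n:ℤ)-1+5 = (n:ℤ)+4 from by ring,
        show (n:ℤ)-1+2 = (n:ℤ)+1 from by ring,
        show (n:ℤ)-1+4 = (n:ℤ)+3 from by ring,
        show (n:ℤ)+1+1 = (n:ℤ)+2 from by ring,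
        show (n:ℤ)+1+5 = (n:ℤ)+6 from by ring,
        show (n:ℤ)+1+2 = (n:ℤ)+3 from by ring,
        show (n:ℤ)+1+4 = (n:ℤ)+5 from by ring,
        e0, e1, e2, e3, e4, e5, e6]
      rw [hTval, hgval]
      have hne1 : 1 - χ^n * χ ≠ 0 := by simpa using hne 1 le_rfl
      have hne2 : 1 - χ^n * χ^2 ≠ 0 := hne 2 (by norm_num)
      have hne3 : 1 - χ^n * χ^3 ≠ 0 := hne 3 (by norm_num)
      have hne4 : 1 - χ^n * χ^4 ≠ 0 := hne 4 (by norm_num)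
      have hne5 : 1 - χ^n * χ^5 ≠ 0 := hne 5 (by norm_num)
      have hdd1 : (1:ℝ) + χ ≠ 0 := by positivity
      have hdd2 : (1:ℝ) + χ^2 ≠ 0 := by positivity
      generalize hgen : χ ^ n = y at hne1 hne2 hne3 hne4 hne5 ⊢
      simp only [pow_one]
      have h1 : 1 - χ * y ≠ 0 := by rwa [mul_comm]
      have h2 : 1 - χ^2 * y ≠ 0 := by rwa [mul_comm]
      have h3 : 1 - χ^3 * y ≠ 0 := by rwa [mul_comm]
      have h4 : 1 - χ^4 * y ≠ 0 := by rwa [mul_comm]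
      have h5 : 1 - χ^5 * y ≠ 0 := by rwa [mul_comm]
      field_simp
      ring
    · have hlim : Filter.Tendsto (fun n : ℕ => χ^n) Filter.atTop (nhds 0) :=
        tendsto_pow_atTop_nhds_zero_of_lt_one hχ0.le hχ1
      have key : ∀ n : ℕ, Tseq (n:ℤ) =
          T * (1 - χ^1 * χ^n) * (1 - χ^5 * χ^n) /
            ((1 - χ^2 * χ^n) * (1 - χ^4 * χ^n)) := by
        intro n
        show T * (1 - χ^((n:ℤ)+1)) * (1 - χ^((n:ℤ)+5)) /
          ((1 - χ^((n:ℤ)+2)) * (1 - χ^((n:ℤ)+4))) = _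
        have e1 : χ ^ ((n:ℤ)+1) = χ^n * χ^1 := by exact_mod_cast epow n 1
        have e2 : χ ^ ((n:ℤ)+2) = χ^n * χ^2 := by exact_mod_cast epow n 2
        have e4 : χ ^ ((n:ℤ)+4) = χ^n * χ^4 := by exact_mod_cast epow n 4
        have e5 : χ ^ ((n:ℤ)+5) = χ^n * χ^5 := by exact_mod_cast epow n 5
        rw [e1, e2, e4, e5]; ring_nf
      simp only [key]
      have h := Filter.Tendsto.div
        (((tendsto_const_nhds (x := T)).mul
          ((tendsto_const_nhds (x := (1:ℝ))).sub (hlim.const_mul (χ^1)))).mul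
          ((tendsto_const_nhds (x := (1:ℝ))).sub (hlim.const_mul (χ^5))))
        (((tendsto_const_nhds (x := (1:ℝ))).sub (hlim.const_mul (χ^2))).mul
          ((tendsto_const_nhds (x := (1:ℝ))).sub (hlim.const_mul (χ^4))))
        (by norm_num)
      simp only [Pi.div_def, mul_zero, sub_zero, mul_one, div_one] at h
      exact h
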